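/- arXiv:2009.10572 — 5 statements merged into one kernel-verified Lean document; each statement's English description precedes it below -/
import Mathlib

section
/- Let e ≥ 0 be an integer and let x : ℕ → Ω satisfy: for every k ≥ 1, x k lies in GF(2, 2·3^k); and for every k ≥ 2, (x k)³ + (x k) + (x(k-1))^(2^e) = 0 and x k does not lie in GF(2, 2·3^(k-1)) (so the recursion defines an infinite tower of fields). Let n ≥ 2 and let p be a prime dividing 2^(2·3^(n-1)) − 1. Suppose x(n-1) ≠ 0 and there is no y ∈ Ω lying in GF(2, 2·3^(n-1)) with y^p = x(n-1). Then for every j ≥ n, there is no y ∈ Ω lying in GF(2, 2·3^j) with y^p = x j (i.e., x j is not a p-th power in the multiplicative group of GF(2, 2·3^j)). -/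
noncomputable abbrev Ω : Type := AlgebraicClosure (ZMod 2)

/-- `z` lies in the subfield `GF(2, m)` of the algebraic closure of `ZMod 2`. -/
def LiesIn (m : ℕ) (z : Ω) : Prop := z ^ (2 ^ m) = z

/-- Three distinct roots of `X^3 + X + c` in characteristic two have product `c`. -/
lemma cubic_roots_prod {F : Type*} [Field F] (h2 : (2 : F) = 0) (a b d c : F)
    (ha : a ^ 3 + a + c = 0) (hb : b ^ 3 + b + c = 0) (hd : d ^ 3 + d + c = 0)
    (hab : a ≠ b) (had : a ≠ d) (hbd : b ≠ d) : a * b * d = c := by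
  have e1 : a ^ 2 + a * b + b ^ 2 + 1 = 0 := by
    have hne : a - b ≠ 0 := sub_ne_zero.mpr hab
    have h : (a - b) * (a ^ 2 + a * b + b ^ 2 + 1) = 0 := by linear_combination ha - hb
    exact (mul_eq_zero.mp h).resolve_left hne
  have e2 : a ^ 2 + a * d + d ^ 2 + 1 = 0 := by
    have hne : a - d ≠ 0 := sub_ne_zero.mpr had
    have h : (a - d) * (a ^ 2 + a * d + d ^ 2 + 1) = 0 := by linear_combination ha - hd
    exact (mul_eq_zero.mp h).resolve_left hne
  have e3 : a + b + d = 0 := by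
    have hne : b - d ≠ 0 := sub_ne_zero.mpr hbd
    have h : (b - d) * (a + b + d) = 0 := by linear_combination e1 - e2
    exact (mul_eq_zero.mp h).resolve_left hne
  linear_combination (a * b) * e3 - a * e1 + ha - c * h2

lemma frob_add (M : ℕ) (u v : Ω) : (u + v) ^ 2 ^ M = u ^ 2 ^ M + v ^ 2 ^ M := by
  haveI : Fact (Nat.Prime 2) := ⟨Nat.prime_two⟩
  exact add_pow_char_pow ..

set_option maxHeartbeats 1000000 in
theorem stmt_6 (e : ℕ) (x : ℕ → Ω)
    (hx : ∀ k, 1 ≤ k → LiesIn (2 * 3 ^ k) (x k))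
    (hrec : ∀ k, 2 ≤ k → (x k) ^ 3 + x k + (x (k - 1)) ^ (2 ^ e) = 0)
    (hirr : ∀ k, 2 ≤ k → ¬ LiesIn (2 * 3 ^ (k - 1)) (x k))
    (n : ℕ) (hn : 2 ≤ n)
    (p : ℕ) (hp : p.Prime) (hpdvd : p ∣ 2 ^ (2 * 3 ^ (n - 1)) - 1)
    (hxn0 : x (n - 1) ≠ 0)
    (hnp : ¬ ∃ y : Ω, LiesIn (2 * 3 ^ (n - 1)) y ∧ y ^ p = x (n - 1)) :
    ∀ j, n ≤ j → ¬ ∃ y : Ω, LiesIn (2 * 3 ^ j) y ∧ y ^ p = x j := by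
  have h2 : (2 : Ω) = 0 := by exact_mod_cast CharP.cast_eq_zero Ω 2
  -- p is odd
  have hp2 : p ≠ 2 := by
    rintro rfl
    have h1 : 1 ≤ 2 ^ (2 * 3 ^ (n - 1)) := Nat.one_le_two_pow
    have hdd : 2 ∣ 2 ^ (2 * 3 ^ (n - 1)) := dvd_pow_self 2 (by positivity)
    omega
  haveI : Fact p.Prime := ⟨hp⟩
  -- Fermat: 2^(e*(p-1)) = 1 + B * p for some B
  have h2unit : (2 : ZMod p) ≠ 0 := by
    have h : ((2 : ℕ) : ZMod p) ≠ 0 := by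
      rw [Ne, ZMod.natCast_eq_zero_iff]
      exact fun hdvd => hp2 ((Nat.prime_dvd_prime_iff_eq hp Nat.prime_two).mp hdvd)
    simpa using h
  have fer : (2 : ZMod p) ^ (p - 1) = 1 := ZMod.pow_card_sub_one_eq_one h2unit
  have hdvdf : p ∣ 2 ^ (e * (p - 1)) - 1 := by
    rw [← ZMod.natCast_eq_zero_iff]
    have h1le : (1 : ℕ) ≤ 2 ^ (e * (p - 1)) := Nat.one_le_two_pow
    push_cast [h1le]
    rw [mul_comm e (p - 1), pow_mul, fer, one_pow]
    ring
  obtain ⟨B, hB⟩ := hdvdf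
  have hkey : 2 ^ e * 2 ^ (e * (p - 2)) = 1 + B * p := by
    have h1le : (1 : ℕ) ≤ 2 ^ (e * (p - 1)) := Nat.one_le_two_pow
    have hBB : 2 ^ (e * (p - 1)) = p * B + 1 := Nat.eq_add_of_sub_eq h1le hB
    have hexp : e + e * (p - 2) = e * (p - 1) := by
      have hple : 2 ≤ p := hp.two_le
      have h : p - 1 = 1 + (p - 2) := by omega
      rw [h, Nat.mul_add, Nat.mul_one]
    rw [← pow_add, hexp, hBB]
    ring
  -- nonvanishing
  have hx0 : ∀ k, 2 ≤ k → x k ≠ 0 := by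
    intro k hk h
    refine hirr k hk ?_
    rw [LiesIn, h, zero_pow (by positivity)]
  -- the key step
  have step : ∀ k, 2 ≤ k → x (k - 1) ≠ 0 →
      (¬ ∃ y : Ω, LiesIn (2 * 3 ^ (k - 1)) y ∧ y ^ p = x (k - 1)) →
      ¬ ∃ y : Ω, LiesIn (2 * 3 ^ k) y ∧ y ^ p = x k := by
    intro k hk hxk1 hprev
    rintro ⟨y, hy, hyp⟩
    set M := 2 * 3 ^ (k - 1) with hMdef
    set q := 2 ^ M with hqdef
    have hk1 : k - 1 + 1 = k := by omega
    have h3k : (3:ℕ) ^ k = 3 ^ (k-1) * 3 := by rw [← pow_succ, hk1]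
    have hMk : 2 * 3 ^ k = M + (M + M) := by rw [hMdef]; omega
    have hqqq : q * (q * q) = 2 ^ (2 * 3 ^ k) := by
      rw [hqdef, ← pow_add, ← pow_add, hMk]
    have hq3 : ∀ u : Ω, ((u ^ q) ^ q) ^ q = u ^ 2 ^ (2 * 3 ^ k) := by
      intro u
      rw [← pow_mul, ← pow_mul, hqqq]
    have frobq : ∀ u v : Ω, (u + v) ^ q = u ^ q + v ^ q := by
      intro u v; rw [hqdef]; exact frob_add M u v
    have hq0 : (0 : Ω) ^ q = 0 := by
      rw [hqdef]; exact zero_pow (by positivity)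
    set a := x k with hadef
    set c := (x (k - 1)) ^ (2 ^ e) with hcdef
    have h1 : a ^ 3 + a + c = 0 := hrec k hk
    have hxq : (x (k - 1)) ^ q = x (k - 1) := hx (k - 1) (by omega)
    have hc : c ^ q = c := by
      rw [hcdef, ← pow_mul, mul_comm, pow_mul, hxq]
    have ha3 : ((a ^ q) ^ q) ^ q = a := by rw [hq3]; exact hx k (by omega)
    have hab : a ^ q ≠ a := fun h => hirr k hk h
    -- Frobenius of the cubic equation
    have frob_cubic : ∀ u : Ω, u ^ 3 + u + c = 0 → (u ^ q) ^ 3 + u ^ q + c = 0 := by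
      intro u hu
      have h : (u ^ 3 + u + c) ^ q = (0 : Ω) ^ q := by rw [hu]
      rw [frobq, frobq, pow_right_comm, hc, hq0] at h
      exact h
    have hb3 : (a ^ q) ^ 3 + a ^ q + c = 0 := frob_cubic a h1
    have hd3 : ((a ^ q) ^ q) ^ 3 + (a ^ q) ^ q + c = 0 := frob_cubic (a ^ q) hb3
    -- the three roots are distinct
    have habne : a ≠ a ^ q := fun h => hab h.symm
    have hadne : a ≠ (a ^ q) ^ q := by
      intro h
      apply hab
      conv_lhs => rw [h]
      exact ha3
    have hbdne : a ^ q ≠ (a ^ q) ^ q := by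
      intro h
      apply hadne
      have h2' : (a ^ q) ^ q = ((a ^ q) ^ q) ^ q := congrArg (· ^ q) h
      rw [ha3] at h2'
      exact h2'.symm
    have habd : a * a ^ q * (a ^ q) ^ q = c :=
      cubic_roots_prod h2 a (a ^ q) ((a ^ q) ^ q) c h1 hb3 hd3 habne hadne hbdne
    -- the norm of y
    have hyq3 : ((y ^ q) ^ q) ^ q = y := by rw [hq3]; exact hy
    set z := y * y ^ q * (y ^ q) ^ q with hzdef
    have hzq : z ^ q = z := by
      rw [hzdef, mul_pow, mul_pow, hyq3]; ring
    have hzp : z ^ p = c := by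
      have e1 : (y ^ q) ^ p = (y ^ p) ^ q := pow_right_comm y q p
      have e2 : ((y ^ q) ^ q) ^ p = ((y ^ p) ^ q) ^ q := by
        rw [pow_right_comm (y ^ q) q p, e1]
      rw [hzdef, mul_pow, mul_pow, e1, e2, hyp]
      exact habd
    -- build a p-th root of x (k-1) in GF(2, M)
    set w := z ^ 2 ^ (e * (p - 2)) / (x (k - 1)) ^ B with hwdef
    have hw1 : LiesIn M w := by
      show w ^ 2 ^ M = w
      rw [hwdef, div_pow, ← hqdef, pow_right_comm z, pow_right_comm (x (k-1)), hzq, hxq]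
    have num : (z ^ 2 ^ (e * (p - 2))) ^ p = x (k - 1) * x (k - 1) ^ (B * p) := by
      rw [pow_right_comm, hzp, hcdef, ← pow_mul, hkey, pow_add, pow_one]
    have hw2 : w ^ p = x (k - 1) := by
      rw [hwdef, div_pow, num, ← pow_mul]
      exact mul_div_cancel_right₀ _ (pow_ne_zero _ hxk1)
    exact hprev ⟨w, hw1, hw2⟩
  intro j hj
  induction j, hj using Nat.le_induction with
  | base => exact step n hn hxn0 hnp
  | succ j hj ih =>
    have h1 : j + 1 - 1 = j := by omega
    refine step (j + 1) (by omega) ?_ ?_ <;> rw [h1]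
    · exact hx0 j (by omega)
    · exact ih
end

section
/- For integers m ≥ 1 and 0 ≤ i < m and z ∈ Ω, define N_{m,i}(z) := z^(∏_{t=1}^{i} (4^(2·3^(m-t)) + 4^(3^(m-t)) + 1)), with N_{m,0}(z) = z; this is the norm map from GF(2, 2·3^m) to GF(2, 2·3^(m-i)). Let e ≥ 0, n ≥ 2 and 1 ≤ j < n be integers and let x : ℕ → Ω be such that, for every k ≥ 1, x k is nonzero and lies in GF(2, 2·3^k). Then N_{n,j}(x n) / (x(n-j))^(2^(e·j)) = ∏_{k=1}^{j} ( N_{n-k, j-k}( N_{n-k+1,1}(x(n-k+1)) / (x(n-k))^(2^e) ) )^(2^(e·(k-1))). In particular, if N_{k,1}(x k) = (x(k-1))^(2^e) for every k with 2 ≤ k ≤ n, then N_{n,j}(x n) = (x(n-j))^(2^(e·j)). -/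
/-- The norm map from `GF(2, 2·3^m)` down to `GF(2, 2·3^(m-i))`:
`N_{m,i}(z) = z ^ (∏_{t=1}^{i} (4^(2·3^(m-t)) + 4^(3^(m-t)) + 1))`. -/
noncomputable def Nrm (m i : ℕ) (z : Ω) : Ω :=
  z ^ (∏ t ∈ Finset.Icc 1 i, (4 ^ (2 * 3 ^ (m - t)) + 4 ^ (3 ^ (m - t)) + 1))

lemma nrm_zero' (m : ℕ) (z : Ω) : Nrm m 0 z = z := by simp [Nrm]

lemma nrm_pow (m i p : ℕ) (z : Ω) : Nrm m i (z ^ p) = (Nrm m i z) ^ p := by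
  simp [Nrm, ← pow_mul, mul_comm]

lemma nrm_div (m i : ℕ) (a b : Ω) : Nrm m i (a / b) = Nrm m i a / Nrm m i b :=
  div_pow a b _

lemma nrm_one (m i : ℕ) : Nrm m i (1 : Ω) = 1 := one_pow _

lemma nrm_ne_zero (m i : ℕ) {z : Ω} (hz : z ≠ 0) : Nrm m i z ≠ 0 := pow_ne_zero _ hz

lemma prod_Icc_succ_bot {M : Type*} [CommMonoid M] (j : ℕ) (F : ℕ → M) :
    ∏ k ∈ Finset.Icc 1 (j + 1), F k = F 1 * ∏ k ∈ Finset.Icc 1 j, F (k + 1) := by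
  rw [← Finset.Ico_add_one_right_eq_Icc, ← Finset.Ico_add_one_right_eq_Icc, Finset.prod_Ico_eq_prod_range,
    Finset.prod_Ico_eq_prod_range]
  simp only [Nat.add_sub_cancel]
  rw [Finset.prod_range_succ', mul_comm]
  rfl

lemma nrm_comp (m i : ℕ) (z : Ω) : Nrm (m - 1) i (Nrm m 1 z) = Nrm m (i + 1) z := by
  simp only [Nrm, ← pow_mul]
  congr 1
  rw [prod_Icc_succ_bot i (fun t => 4 ^ (2 * 3 ^ (m - t)) + 4 ^ (3 ^ (m - t)) + 1)]
  simp only [Finset.Icc_self, Finset.prod_singleton]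
  congr 1
  apply Finset.prod_congr rfl
  intro t _
  have : m - 1 - t = m - (t + 1) := by omega
  rw [this]

lemma key (e : ℕ) (x : ℕ → Ω) (hx : ∀ k, 1 ≤ k → x k ≠ 0) :
    ∀ j, 1 ≤ j → ∀ n, j < n →
    Nrm n j (x n) / (x (n - j)) ^ (2 ^ (e * j)) =
      ∏ k ∈ Finset.Icc 1 j,
        (Nrm (n - k) (j - k)
          (Nrm (n - k + 1) 1 (x (n - k + 1)) / (x (n - k)) ^ (2 ^ e))) ^ (2 ^ (e * (k - 1))) := by
  intro j hj
  induction j, hj using Nat.le_induction with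
  | base =>
    intro n hn
    have h1 : n - 1 + 1 = n := by omega
    simp [Finset.Icc_self, h1, nrm_zero', mul_one]
  | succ j hj ih =>
    intro n hn
    have hxn1 : x (n - 1) ≠ 0 := hx _ (by omega)
    have hxnj : x (n - 1 - j) ≠ 0 := hx _ (by omega)
    have ihn := ih (n - 1) (by omega)
    rw [prod_Icc_succ_bot]
    have hshift : ∏ k ∈ Finset.Icc 1 j,
        (Nrm (n - (k + 1)) (j + 1 - (k + 1))
          (Nrm (n - (k + 1) + 1) 1 (x (n - (k + 1) + 1)) / (x (n - (k + 1))) ^ (2 ^ e)))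
            ^ (2 ^ (e * (k + 1 - 1))) =
        (∏ k ∈ Finset.Icc 1 j,
          (Nrm ((n - 1) - k) (j - k)
            (Nrm ((n - 1) - k + 1) 1 (x ((n - 1) - k + 1)) / (x ((n - 1) - k)) ^ (2 ^ e)))
              ^ (2 ^ (e * (k - 1)))) ^ (2 ^ e) := by
      rw [← Finset.prod_pow]
      apply Finset.prod_congr rfl
      intro k hk
      simp only [Finset.mem_Icc] at hk
      have h1 : n - (k + 1) = n - 1 - k := by omega
      have h2 : j + 1 - (k + 1) = j - k := by omega
      have h3 : e * (k + 1 - 1) = e * (k - 1) + e := by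
        have hk' : k - 1 + 1 = k := by omega
        calc e * (k + 1 - 1) = e * (k - 1 + 1) := by rw [Nat.add_sub_cancel, hk']
        _ = e * (k - 1) + e := by ring
      rw [h1, h2, ← pow_mul, ← pow_add, h3]
    rw [hshift, ← ihn]
    have h4 : n - 1 + 1 = n := by omega
    have h5 : j + 1 - 1 = j := by omega
    have h6 : e * (1 - 1) = 0 := by simp
    rw [h4, h5, h6, pow_zero, pow_one]
    rw [nrm_div, nrm_pow, ← nrm_comp]
    have h7 : n - (j + 1) = n - 1 - j := by omega
    rw [h7]
    have hA : Nrm (n - 1) j (Nrm n 1 (x n)) = Nrm (n - 1) j (Nrm n 1 (x n)) := rfl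
    have hne1 : Nrm (n - 1) j (x (n - 1)) ≠ 0 := nrm_ne_zero _ _ hxn1
    field_simp
    ring_nf
    try tauto
    rw [mul_assoc (Nrm (n - 1) j (Nrm n 1 (x n)) * _), ← mul_pow, mul_inv_cancel₀ hxnj, one_pow, mul_one]

theorem stmt_7 (e n j : ℕ) (hn : 2 ≤ n) (hj1 : 1 ≤ j) (hjn : j < n)
    (x : ℕ → Ω)
    (hx : ∀ k, 1 ≤ k → x k ≠ 0 ∧ LiesIn (2 * 3 ^ k) (x k)) :
    Nrm n j (x n) / (x (n - j)) ^ (2 ^ (e * j)) =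
      ∏ k ∈ Finset.Icc 1 j,
        (Nrm (n - k) (j - k)
          (Nrm (n - k + 1) 1 (x (n - k + 1)) / (x (n - k)) ^ (2 ^ e))) ^ (2 ^ (e * (k - 1))) ∧
    ((∀ k, 2 ≤ k → k ≤ n → Nrm k 1 (x k) = (x (k - 1)) ^ (2 ^ e)) →
      Nrm n j (x n) = (x (n - j)) ^ (2 ^ (e * j))) := by
  have hx' : ∀ k, 1 ≤ k → x k ≠ 0 := fun k hk => (hx k hk).1
  have h1 := key e x hx' j hj1 n hjn
  refine ⟨h1, ?_⟩
  intro h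
  have hprod : ∏ k ∈ Finset.Icc 1 j,
      (Nrm (n - k) (j - k)
        (Nrm (n - k + 1) 1 (x (n - k + 1)) / (x (n - k)) ^ (2 ^ e))) ^ (2 ^ (e * (k - 1))) = 1 := by
    apply Finset.prod_eq_one
    intro k hk
    simp only [Finset.mem_Icc] at hk
    have h2 : n - k + 1 - 1 = n - k := by omega
    rw [h (n - k + 1) (by omega) (by omega), h2,
      div_self (pow_ne_zero _ (hx' (n - k) (by omega))), nrm_one, one_pow]
  rw [hprod] at h1
  have hne : (x (n - j)) ^ (2 ^ (e * j)) ≠ 0 := pow_ne_zero _ (hx' (n - j) (by omega))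
  field_simp at h1
  exact h1
end

section
/- Let e ≥ 0 be an integer and let x : ℕ → Ω satisfy: for every k ≥ 1, x k lies in GF(2, 2·3^k); for every k ≥ 2, (x k)³ + (x k) + (x(k-1))^(2^e) = 0 and x k does not lie in GF(2, 2·3^(k-1)) (so the recursion defines an infinite normal tower of fields). Suppose moreover that x 1 ≠ 0 and x 1 is not a cube in GF(2,6), i.e. there is no y ∈ Ω with y^(2^6) = y and y³ = x 1. Then for every n ≥ 2, (x n)³ does not lie in GF(2, 2·3^(n-1)), and orderOf (x n) > 3^((n² + 3n)/2 − 1). -/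
namespace Aux

lemma two_eq_zero : (2 : Ω) = 0 := by
  have : CharP Ω 2 := inferInstance
  exact_mod_cast (CharP.cast_eq_zero Ω 2)

lemma frob_inj (a : ℕ) {s t : Ω} (h : s ^ (2:ℕ) ^ a = t ^ (2:ℕ) ^ a) : s = t := by
  have h2 : (s - t) ^ (2:ℕ) ^ a = 0 := by
    rw [sub_pow_char_pow, h, sub_self]
  have h3 := pow_eq_zero_iff (n := (2:ℕ)^a) (by positivity) |>.mp h2
  exact sub_eq_zero.mp h3

lemma L_pow {m t : ℕ} {z : Ω} (h : LiesIn m z) : LiesIn m (z ^ t) := by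
  unfold LiesIn at *
  rw [← pow_mul, mul_comm, pow_mul, h]

lemma L_mul {m : ℕ} {a b : Ω} (ha : LiesIn m a) (hb : LiesIn m b) : LiesIn m (a * b) := by
  unfold LiesIn at *; rw [mul_pow, ha, hb]

lemma L_inv {m : ℕ} {a : Ω} (ha : LiesIn m a) : LiesIn m a⁻¹ := by
  unfold LiesIn at *; rw [inv_pow, ha]

lemma L_add {m : ℕ} {a b : Ω} (ha : LiesIn m a) (hb : LiesIn m b) : LiesIn m (a + b) := by
  unfold LiesIn at *; rw [add_pow_char_pow, ha, hb]

lemma L_zero {m : ℕ} : LiesIn m 0 := by unfold LiesIn; simp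

lemma L_one {m : ℕ} : LiesIn m 1 := by unfold LiesIn; simp

lemma L_mul_exp {m k : ℕ} {z : Ω} (h : LiesIn m z) : z ^ (2:ℕ) ^ (m * k) = z := by
  induction k with
  | zero => simp
  | succ k ih =>
    have : m * (k+1) = m * k + m := by ring
    rw [this, pow_add, pow_mul, ih, h]

lemma L_dvd {a b : ℕ} {z : Ω} (hab : a ∣ b) (h : LiesIn a z) : LiesIn b z := by
  obtain ⟨c, rfl⟩ := hab
  exact L_mul_exp h

lemma L_diff {a b : ℕ} {z : Ω} (hab : LiesIn (a + b) z) (ha : LiesIn a z) : LiesIn b z := by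
  unfold LiesIn at *
  apply frob_inj a
  rw [← pow_mul, ← pow_add, add_comm b a, hab, ha]

lemma L_sq_pow {m t : ℕ} {z : Ω} (h : LiesIn m z) : LiesIn m (z ^ (2:ℕ) ^ t) := L_pow h

end Aux

namespace Aux2

lemma L1 {d M t : ℕ} (hdM : d ∣ M) (hM : 3 ^ t ∣ M) (hd : ¬ 3 ^ t ∣ d) : d ∣ M / 3 := by
  have hd0 : d ≠ 0 := by
    rintro rfl
    obtain rfl : M = 0 := Nat.eq_zero_of_zero_dvd hdM
    exact hd (dvd_zero _)
  have ht : 1 ≤ t := by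
    by_contra h
    interval_cases t
    · exact hd (by simpa using one_dvd d)
  have h3M : 3 ∣ M := dvd_trans (dvd_pow_self 3 (by omega : t ≠ 0)) hM
  set a := d.factorization 3 with ha
  have hproj : 3 ^ a ∣ d := Nat.ordProj_dvd d 3
  have hat : a < t := by
    by_contra h
    push_neg at h
    exact hd (dvd_trans (pow_dvd_pow 3 h) hproj)
  set u := d / 3 ^ a with hu
  have hdu : d = 3 ^ a * u := (Nat.ordProj_mul_ordCompl_eq_self d 3).symm
  have h3u : ¬ 3 ∣ u := Nat.not_dvd_ordCompl (by norm_num) hd0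
  have hcop : Nat.Coprime 3 u := (Nat.Prime.coprime_iff_not_dvd (by norm_num)).mpr h3u
  have huM : u ∣ M := dvd_trans ⟨3 ^ a, by rw [hdu]; ring⟩ hdM
  have hM3 : M = 3 * (M / 3) := (Nat.mul_div_cancel' h3M).symm
  have h1 : 3 ^ a ∣ M / 3 := by
    have : 3 ^ (a + 1) ∣ M := dvd_trans (pow_dvd_pow 3 (by omega)) hM
    have := (Nat.dvd_div_iff_mul_dvd h3M).mpr (by rw [← pow_succ'] ; exact this)
    exact this
  have h2 : u ∣ M / 3 := by
    have : u ∣ 3 * (M / 3) := hM3 ▸ huM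
    exact (Nat.Coprime.dvd_of_dvd_mul_left hcop.symm this)
  rw [hdu]
  exact Nat.Coprime.mul_dvd_of_dvd_of_dvd (Nat.Coprime.pow_left a hcop) h1 h2

lemma pow64mod9 (t : ℕ) : 64 ^ t % 9 = 1 := by
  rw [Nat.pow_mod]
  norm_num

lemma four_pow_mod9 {k : ℕ} (hk : 1 ≤ k) : 4 ^ 3 ^ k % 9 = 1 := by
  have : (3:ℕ) ^ k = 3 * 3 ^ (k - 1) := by
    rw [← pow_succ']
    congr 1
    omega
  rw [this, pow_mul]
  norm_num
  exact pow64mod9 _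

lemma Bmod9 (k : ℕ) : (4 ^ (2 * 3 ^ k) + 4 ^ 3 ^ k + 1) % 9 = 3 := by
  rcases Nat.eq_zero_or_pos k with rfl | hk
  · norm_num
  · have h := four_pow_mod9 hk
    have h2 : 4 ^ (2 * 3 ^ k) % 9 = 1 := by
      rw [mul_comm, pow_mul, Nat.pow_mod, h]
    omega

lemma factor_step (k : ℕ) : 4 ^ 3 ^ (k + 1) - 1 = (4 ^ 3 ^ k - 1) * (4 ^ (2 * 3 ^ k) + 4 ^ 3 ^ k + 1) := by
  have h1 : 1 ≤ (4:ℕ) ^ 3 ^ k := Nat.one_le_pow _ _ (by norm_num)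
  have e1 : (4:ℕ) ^ 3 ^ (k+1) = (4 ^ 3 ^ k) ^ 3 := by
    rw [← pow_mul, pow_succ]
  have e2 : (4:ℕ) ^ (2 * 3 ^ k) = (4 ^ 3 ^ k) ^ 2 := by
    rw [← pow_mul, mul_comm]
  rw [e1, e2]
  set t := (4:ℕ) ^ 3 ^ k
  zify [h1, Nat.one_le_pow 3 t (by omega)]
  ring

lemma val3 : ∀ k : ℕ, 3 ^ (k + 1) ∣ 4 ^ 3 ^ k - 1 ∧ ¬ 3 ^ (k + 2) ∣ 4 ^ 3 ^ k - 1 := by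
  intro k
  induction k with
  | zero => decide
  | succ k ih =>
    obtain ⟨ih1, ih2⟩ := ih
    set A := (4:ℕ) ^ 3 ^ k - 1
    set B := (4:ℕ) ^ (2 * 3 ^ k) + 4 ^ 3 ^ k + 1 with hB
    have hfac : 4 ^ 3 ^ (k + 1) - 1 = A * B := factor_step k
    have hBm : B % 9 = 3 := Bmod9 k
    have hB3 : B = 3 * (B / 3) := (Nat.mul_div_cancel' (by omega : 3 ∣ B)).symm
    set B' := B / 3 with hB'
    have h3B' : ¬ 3 ∣ B' := by omega
    constructor
    · rw [hfac, hB3]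
      calc 3 ^ (k + 2) = 3 ^ (k+1) * 3 := by ring
        _ ∣ A * 3 := mul_dvd_mul ih1 dvd_rfl
        _ ∣ A * (3 * B') := ⟨B', by ring⟩
    · intro hcon
      rw [hfac, hB3] at hcon
      have : 3 ^ (k + 2) ∣ A * B' := by
        have h9 : (3:ℕ) ^ (k + 3) = 3 * 3 ^ (k+2) := by ring
        rw [h9] at hcon
        have : A * (3 * B') = 3 * (A * B') := by ring
        rw [this] at hcon
        exact (Nat.mul_dvd_mul_iff_left (by norm_num : 0 < 3)).mp hcon
      have hcop : Nat.Coprime (3 ^ (k+2)) B' :=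
        Nat.Coprime.pow_left _ ((Nat.Prime.coprime_iff_not_dvd (by norm_num)).mpr h3B')
      exact ih2 (hcop.dvd_of_dvd_mul_right this)

lemma ell_big {ℓ n : ℕ} (hp : ℓ.Prime) (hn : 1 ≤ n)
    (h1 : ℓ ∣ 2 ^ (2 * 3 ^ n) - 1) (h2 : ¬ ℓ ∣ 2 ^ (2 * 3 ^ (n - 1)) - 1) :
    2 * 3 ^ n + 1 ≤ ℓ := by
  haveI : Fact ℓ.Prime := ⟨hp⟩
  have hodd : ℓ ≠ 2 := by
    rintro rfl
    have h2d : (2:ℕ) ∣ 2 ^ (2 * 3 ^ n) := dvd_pow_self 2 (by positivity)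
    have h1le : 1 ≤ (2:ℕ) ^ (2 * 3 ^ n) := Nat.one_le_two_pow
    omega
  have key : ∀ K : ℕ, (ℓ ∣ 2 ^ K - 1) ↔ (2 : ZMod ℓ) ^ K = 1 := by
    intro K
    have h1le : 1 ≤ (2:ℕ) ^ K := Nat.one_le_two_pow
    constructor
    · intro h
      have := (ZMod.natCast_eq_zero_iff _ ℓ).mpr h
      push_cast [h1le] at this
      linear_combination this
    · intro h
      apply (ZMod.natCast_eq_zero_iff _ ℓ).mp
      push_cast [h1le]
      linear_combination h
  set r := orderOf (2 : ZMod ℓ) with hr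
  have hr1 : r ∣ 2 * 3 ^ n := orderOf_dvd_iff_pow_eq_one.mpr ((key _).mp h1)
  have hr2 : ¬ r ∣ 2 * 3 ^ (n - 1) := fun h => h2 ((key _).mpr (orderOf_dvd_iff_pow_eq_one.mp h))
  have h3r : 3 ^ n ∣ r := by
    by_contra hcon
    apply hr2
    have := L1 hr1 (⟨2, by ring⟩ : (3:ℕ)^n ∣ 2 * 3 ^ n) hcon
    have hq : 2 * 3 ^ n / 3 = 2 * 3 ^ (n - 1) := by
      have : (3:ℕ) ^ n = 3 ^ (n-1) * 3 := by
        rw [← pow_succ]; congr 1; omega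
      rw [this]
      omega
    rwa [hq] at this
  have h2ne : (2 : ZMod ℓ) ≠ 0 := by
    intro h
    have := (ZMod.natCast_eq_zero_iff 2 ℓ).mp (by push_cast; exact h)
    have := (Nat.prime_dvd_prime_iff_eq hp Nat.prime_two).mp this
    exact hodd this
  have hrl : r ∣ ℓ - 1 := orderOf_dvd_iff_pow_eq_one.mpr (ZMod.pow_card_sub_one_eq_one h2ne)
  have h3l : 3 ^ n ∣ ℓ - 1 := dvd_trans h3r hrl
  have h2l : 2 ∣ ℓ - 1 := by
    have h2l2 := hp.two_le
    have : ℓ % 2 = 1 := (Nat.Prime.mod_two_eq_one_iff_ne_two hp).mpr hodd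
    omega
  have hfull : 2 * 3 ^ n ∣ ℓ - 1 := Nat.Coprime.mul_dvd_of_dvd_of_dvd (by norm_num [Nat.coprime_pow_right_iff (by omega : 0 < n)]) h2l h3l
  have hl1 : ℓ - 1 ≠ 0 := by have := hp.two_le; omega
  have := Nat.le_of_dvd (by omega) hfull
  omega

lemma pow_mod_order {M : Type*} [Monoid M] (z : M) (K : ℕ) : z ^ K = z ^ (K % orderOf z) := by
  conv_lhs => rw [← Nat.mod_add_div K (orderOf z)]
  rw [pow_add, pow_mul, pow_orderOf_eq_one, one_pow, mul_one]

lemma pow_congr {M : Type*} [Monoid M] {z : M} {i j : ℕ} (h : i ≡ j [MOD orderOf z]) : z ^ i = z ^ j := by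
  rw [pow_mod_order z i, pow_mod_order z j, h]

lemma qfac (q : ℕ) (hq : 1 ≤ q) : (q - 1) * (q * q + q + 1) = q * q * q - 1 := by
  have h3 : 1 ≤ q * q * q := by nlinarith
  zify [hq, h3]
  ring

lemma qid (q : ℕ) (hq : 1 ≤ q) : q * q + q + 1 = (q + 2) * (q - 1) + 3 := by
  zify [hq]
  ring

end Aux2

namespace Main

lemma htwo : (2 : Ω) = 0 := Aux.two_eq_zero

lemma add_eq_zero_char2 {a b : Ω} (h : a + b = 0) : a = b := by
  rw [add_eq_zero_iff_eq_neg] at h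
  simpa [CharTwo.neg_eq] using h

section
variable {e : ℕ} {x : ℕ → Ω}

lemma norm_eq (hx : ∀ k, 1 ≤ k → LiesIn (2 * 3 ^ k) (x k))
    (hrec : ∀ k, 2 ≤ k → (x k) ^ 3 + x k + (x (k - 1)) ^ (2 ^ e) = 0)
    (hirr : ∀ k, 2 ≤ k → ¬ LiesIn (2 * 3 ^ (k - 1)) (x k))
    {k : ℕ} (hk : 2 ≤ k) :
    (x k) ^ (1 + 2 ^ (2 * 3 ^ (k-1)) + 2 ^ (2 * 3 ^ (k-1)) * 2 ^ (2 * 3 ^ (k-1)))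
      = x (k-1) ^ 2 ^ e := by
  set m := 2 * 3 ^ (k - 1) with hm
  set X := x k with hX
  set c := x (k-1) ^ 2 ^ e with hc
  have hcF : LiesIn m c := Aux.L_pow (hx (k-1) (by omega))
  have hX3 : X ^ 3 + X + c = 0 := hrec k hk
  have hXF : ¬ LiesIn m X := hirr k hk
  have hq3 : LiesIn (m + (m + m)) X := by
    have h := hx k (by omega)
    have : 2 * 3 ^ k = m + (m + m) := by
      rw [hm]
      have : (3:ℕ) ^ k = 3 ^ (k-1) * 3 := by rw [← pow_succ]; congr 1; omega
      rw [this]; ring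
    rwa [this] at h
  set y := X ^ (2:ℕ) ^ m with hy
  set z := y ^ (2:ℕ) ^ m with hz
  have hzX : z = X ^ ((2:ℕ) ^ m * 2 ^ m) := by rw [hz, hy, ← pow_mul]
  have hy3 : y ^ 3 + y + c = 0 := by
    have h := congrArg (· ^ (2:ℕ) ^ m) hX3
    simp only [zero_pow (by positivity : (2:ℕ)^m ≠ 0)] at h
    rw [add_pow_char_pow, add_pow_char_pow] at h
    rw [← pow_right_comm] at h
    rw [hcF] at h
    exact h
  have hz3 : z ^ 3 + z + c = 0 := by
    have h := congrArg (· ^ (2:ℕ) ^ m) hy3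
    simp only [zero_pow (by positivity : (2:ℕ)^m ≠ 0)] at h
    rw [add_pow_char_pow, add_pow_char_pow] at h
    rw [← pow_right_comm] at h
    rw [hcF] at h
    exact h
  have hXy : X ≠ y := fun h => hXF h.symm
  have hXz : X ≠ z := by
    intro h
    apply hXF
    have h2m : LiesIn (m + m) X := by
      unfold LiesIn
      rw [pow_add, ← hzX]
      exact h.symm
    exact Aux.L_diff (a := m + m) (b := m) (by rwa [add_comm] at hq3) h2m
  have hyz : y ≠ z := by
    intro h
    apply hXy
    have hzz : z ^ (2:ℕ) ^ m = z := by
      conv_rhs => rw [hz, h]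
    have hXeq : X = z := by
      have h3 := hq3
      unfold LiesIn at h3
      calc X = X ^ (2:ℕ) ^ (m + (m + m)) := h3.symm
        _ = ((X ^ (2:ℕ) ^ m) ^ (2:ℕ) ^ m) ^ (2:ℕ) ^ m := by
            rw [← pow_mul, ← pow_mul, pow_add, pow_add]
        _ = z ^ (2:ℕ) ^ m := by rw [← hy, ← hz]
        _ = z := hzz
    exact hXeq.trans h.symm
  have hAxy : X ^ 2 + X * y + y ^ 2 + 1 = 0 := by
    have hfac : (X + y) * (X ^ 2 + X * y + y ^ 2 + 1) = 0 := by
      linear_combination hX3 + hy3 + (X^2*y + X*y^2 - c) * htwo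
    rcases mul_eq_zero.mp hfac with h | h
    · exact absurd (add_eq_zero_char2 h) hXy
    · exact h
  have hAxz : X ^ 2 + X * z + z ^ 2 + 1 = 0 := by
    have hfac : (X + z) * (X ^ 2 + X * z + z ^ 2 + 1) = 0 := by
      linear_combination hX3 + hz3 + (X^2*z + X*z^2 - c) * htwo
    rcases mul_eq_zero.mp hfac with h | h
    · exact absurd (add_eq_zero_char2 h) hXz
    · exact h
  have hsum0 : X + y + z = 0 := by
    have hfac : (y + z) * (X + y + z) = 0 := by
      linear_combination hAxy - hAxz + (X*z + y*z + z^2) * htwo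
    rcases mul_eq_zero.mp hfac with h | h
    · exact absurd (add_eq_zero_char2 h) hyz
    · exact h
  have hxyz : X * y * z = c := by
    linear_combination X*y*hsum0 + X*hAxy + hX3 - (X^2*y + X*y^2 + X^3 + X + c) * htwo
  calc X ^ (1 + 2 ^ m + 2 ^ m * 2 ^ m)
      = X ^ 1 * X ^ (2:ℕ) ^ m * X ^ ((2:ℕ) ^ m * 2 ^ m) := by
        rw [pow_add, pow_add]
    _ = X * y * z := by rw [pow_one, ← hy, ← hzX]
    _ = c := hxyz

end

section
variable {e : ℕ} {x : ℕ → Ω}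

lemma unit_of_LiesIn {M : ℕ} {z : Ω} (hz : z ≠ 0) (h : LiesIn M z) : z ^ (2 ^ M - 1) = 1 := by
  have h1 : (1:ℕ) ≤ 2 ^ M := Nat.one_le_two_pow
  have key : z ^ (2 ^ M - 1) * z = 1 * z := by
    rw [one_mul, ← pow_succ]
    have h2 : 2 ^ M - 1 + 1 = 2 ^ M := by omega
    rw [h2]
    exact h
  exact mul_right_cancel₀ hz key

lemma xne (hirr : ∀ k, 2 ≤ k → ¬ LiesIn (2 * 3 ^ (k - 1)) (x k)) (hx1 : x 1 ≠ 0) :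
    ∀ k, 1 ≤ k → x k ≠ 0 := by
  intro k hk
  rcases eq_or_lt_of_le hk with h | h
  · rw [← h]; exact hx1
  · intro h0
    exact hirr k h (h0 ▸ Aux.L_zero)

lemma xcube_not (hx : ∀ k, 1 ≤ k → LiesIn (2 * 3 ^ k) (x k))
    (hrec : ∀ k, 2 ≤ k → (x k) ^ 3 + x k + (x (k - 1)) ^ (2 ^ e) = 0)
    (hirr : ∀ k, 2 ≤ k → ¬ LiesIn (2 * 3 ^ (k - 1)) (x k))
    {n : ℕ} (hn : 2 ≤ n) : ¬ LiesIn (2 * 3 ^ (n - 1)) (x n ^ 3) := by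
  intro hL
  apply hirr n hn
  have hcF : LiesIn (2 * 3 ^ (n - 1)) (x (n-1) ^ 2 ^ e) := Aux.L_pow (hx (n-1) (by omega))
  have h0 : (x n ^ 3 + x (n-1) ^ 2 ^ e) + x n = 0 := by
    linear_combination (hrec n hn)
  have := add_eq_zero_char2 h0
  rw [← this]
  exact Aux.L_add hL hcF

lemma cube_free (hx : ∀ k, 1 ≤ k → LiesIn (2 * 3 ^ k) (x k))
    (hrec : ∀ k, 2 ≤ k → (x k) ^ 3 + x k + (x (k - 1)) ^ (2 ^ e) = 0)
    (hirr : ∀ k, 2 ≤ k → ¬ LiesIn (2 * 3 ^ (k - 1)) (x k))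
    (hcube : ¬ ∃ y : Ω, y ^ (2 ^ 6) = y ∧ y ^ 3 = x 1) :
    ∀ k, 1 ≤ k → ¬ ∃ w : Ω, w ^ (2:ℕ) ^ (2 * 3 ^ k) = w ∧ w ^ 3 = x k := by
  intro k hk
  induction k, hk using Nat.le_induction with
  | base => simpa using hcube
  | succ k hk ih =>
    rintro ⟨w, hwF, hw3⟩
    apply ih
    set m := 2 * 3 ^ k with hm
    have h3m : 2 * 3 ^ (k+1) = m + (m + m) := by rw [hm, pow_succ]; ring
    have hw3m : w ^ ((2:ℕ) ^ m * 2 ^ m * 2 ^ m) = w := by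
      have := hwF
      rw [h3m, pow_add, pow_add, ← mul_assoc] at this
      exact this
    set N := w ^ (1 + (2:ℕ) ^ m + 2 ^ m * 2 ^ m) with hN
    have hNF : LiesIn m N := by
      unfold LiesIn
      rw [hN, ← pow_mul]
      have hexp : (1 + (2:ℕ) ^ m + 2 ^ m * 2 ^ m) * 2 ^ m
          = 2 ^ m + 2 ^ m * 2 ^ m + 2 ^ m * 2 ^ m * 2 ^ m := by ring
      rw [hexp, pow_add, pow_add, hw3m]
      rw [pow_add, pow_add]
      ring
    have hnorm := norm_eq (e := e) hx hrec hirr (k := k + 1) (by omega)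
    simp only [Nat.add_sub_cancel] at hnorm
    have hN3 : N ^ 3 = x k ^ 2 ^ e := by
      rw [hN, ← pow_mul, mul_comm, pow_mul, hw3]
      exact hnorm
    -- recover x k as a cube
    have hLme : x k ^ (2:ℕ) ^ (m * (e + 1)) = x k := Aux.L_mul_exp (hx k (by omega))
    set P := m * (e + 1) with hP
    have hm0 : 0 < m := by rw [hm]; positivity
    have hme : P ≥ e + 1 := by
      rw [hP]
      exact Nat.le_mul_of_pos_left (e+1) hm0
    clear_value P
    set T := P - e with hT
    have hxk : (x k ^ 2 ^ e) ^ (2:ℕ) ^ T = x k := by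
      rw [← pow_mul, ← pow_add]
      have hthis : e + T = P := by omega
      rw [hthis]
      exact hLme
    refine ⟨N ^ (2:ℕ) ^ T, ?_, ?_⟩
    · exact Aux.L_pow hNF
    · rw [← pow_mul, mul_comm, pow_mul, hN3]
      exact hxk

lemma three_pow_dvd (hx : ∀ k, 1 ≤ k → LiesIn (2 * 3 ^ k) (x k))
    (hrec : ∀ k, 2 ≤ k → (x k) ^ 3 + x k + (x (k - 1)) ^ (2 ^ e) = 0)
    (hirr : ∀ k, 2 ≤ k → ¬ LiesIn (2 * 3 ^ (k - 1)) (x k))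
    (hx1 : x 1 ≠ 0)
    (hcube : ¬ ∃ y : Ω, y ^ (2 ^ 6) = y ∧ y ^ 3 = x 1) :
    ∀ k, 1 ≤ k → 3 ^ (k + 1) ∣ orderOf (x k) := by
  intro k hk
  by_contra hcon
  have hM4 : (2:ℕ) ^ (2 * 3 ^ k) = 4 ^ 3 ^ k := by
    rw [pow_mul]; norm_num
  set M := (2:ℕ) ^ (2 * 3 ^ k) - 1 with hMdef
  have h1le : (1:ℕ) ≤ 2 ^ (2 * 3 ^ k) := Nat.one_le_two_pow
  have hxk0 : x k ≠ 0 := xne hirr hx1 k hk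
  have hxM : x k ^ M = 1 := unit_of_LiesIn hxk0 (hx k hk)
  have hdM : orderOf (x k) ∣ M := orderOf_dvd_of_pow_eq_one hxM
  have h3M : 3 ^ (k + 1) ∣ M := by
    rw [hMdef, hM4]; exact (Aux2.val3 k).1
  have hdm3 : orderOf (x k) ∣ M / 3 := Aux2.L1 hdM h3M hcon
  have hpow : x k ^ (M / 3) = 1 := orderOf_dvd_iff_pow_eq_one.mp hdm3
  obtain ⟨w, hw⟩ := IsAlgClosed.exists_pow_nat_eq (x k) (n := 3) (by norm_num)
  have h3dM : 3 ∣ M := dvd_trans (dvd_pow_self 3 (by omega : k + 1 ≠ 0)) h3M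
  have hwM : w ^ M = 1 := by
    rw [← Nat.mul_div_cancel' h3dM, pow_mul, hw]
    exact hpow
  have hwF : w ^ (2:ℕ) ^ (2 * 3 ^ k) = w := by
    have : w ^ (M + 1) = w := by rw [pow_add, hwM, pow_one, one_mul]
    have hM1 : M + 1 = 2 ^ (2 * 3 ^ k) := by omega
    rwa [hM1] at this
  exact cube_free hx hrec hirr hcube k hk ⟨w, hwF, hw⟩

lemma hD (hx : ∀ k, 1 ≤ k → LiesIn (2 * 3 ^ k) (x k))
    (hrec : ∀ k, 2 ≤ k → (x k) ^ 3 + x k + (x (k - 1)) ^ (2 ^ e) = 0)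
    (hirr : ∀ k, 2 ≤ k → ¬ LiesIn (2 * 3 ^ (k - 1)) (x k))
    (hx1 : x 1 ≠ 0)
    (hcube : ¬ ∃ y : Ω, y ^ (2 ^ 6) = y ∧ y ^ 3 = x 1) :
    ∀ n, 2 ≤ n → ∀ j, 0 < j → j < 3 ^ (n + 1) → ¬ LiesIn (2 * 3 ^ (n - 1)) (x n ^ j) := by
  intro n hn j hj hj3 hLie
  set m := 2 * 3 ^ (n - 1) with hm
  set q := (2:ℕ) ^ m with hq
  have hm1 : 1 ≤ m := by
    rw [hm]
    have : 0 < 3 ^ (n-1) := Nat.pow_pos (by norm_num)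
    omega
  have hq2 : 2 ≤ q := by
    rw [hq]
    calc (2:ℕ) = 2 ^ 1 := (pow_one 2).symm
    _ ≤ 2 ^ m := Nat.pow_le_pow_right (by norm_num) hm1
  have h3m : 2 * 3 ^ n = m + (m + m) := by
    rw [hm]
    have : (3:ℕ) ^ n = 3 ^ (n-1) * 3 := by rw [← pow_succ]; congr 1; omega
    rw [this]; ring
  have hq3 : q * q * q = 2 ^ (2 * 3 ^ n) := by
    rw [hq, h3m, pow_add, pow_add, mul_assoc]
  set X := x n with hX
  have hX0 : X ≠ 0 := xne hirr hx1 n (by omega)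
  have hXj0 : X ^ j ≠ 0 := pow_ne_zero _ hX0
  set u := X ^ (q - 1) with hu
  set s := orderOf u with hs
  have huj : u ^ j = 1 := by
    rw [hu, ← pow_mul, mul_comm, pow_mul]
    exact unit_of_LiesIn hXj0 hLie
  have hsj : s ∣ j := orderOf_dvd_of_pow_eq_one huj
  have hsle : s ≤ j := Nat.le_of_dvd hj hsj
  set Q := q * q + q + 1 with hQ
  have hQfac : (q - 1) * Q = q * q * q - 1 := by
    rw [hQ]; exact Aux2.qfac q (by omega)
  have hX3m : LiesIn (m + (m + m)) X := by
    have := hx n (by omega)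
    rwa [h3m] at this
  have hsQ : s ∣ Q := by
    apply orderOf_dvd_of_pow_eq_one
    rw [hu, ← pow_mul, hQfac]
    have : X ^ (q * q * q - 1) = 1 := by
      rw [hq3]
      exact unit_of_LiesIn hX0 (by rwa [← h3m] at hX3m)
    exact this
  set d := orderOf X with hd
  have h3d : 3 ^ (n + 1) ∣ d := three_pow_dvd hx hrec hirr hx1 hcube n (by omega)
  have hsd : s = d / Nat.gcd d (q - 1) := orderOf_pow' X (by omega : q - 1 ≠ 0)
  have hgd : Nat.gcd d (q - 1) ∣ d := Nat.gcd_dvd_left _ _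
  have hds : d = Nat.gcd d (q - 1) * s := by rw [hsd, Nat.mul_div_cancel' hgd]
  have hq4 : q = 4 ^ 3 ^ (n - 1) := by
    rw [hq, hm, pow_mul]; norm_num
  have hq14 : q - 1 = 4 ^ 3 ^ (n - 1) - 1 := by rw [hq4]
  have hnq1 : ¬ 3 ^ (n + 1) ∣ q - 1 := by
    rw [hq14]
    have := (Aux2.val3 (n-1)).2
    have hee : n - 1 + 2 = n + 1 := by omega
    rwa [hee] at this
  have h3s : 3 ∣ s := by
    by_contra h3s
    have hcop : Nat.Coprime (3 ^ (n + 1)) s :=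
      Nat.Coprime.pow_left _ ((Nat.Prime.coprime_iff_not_dvd (by norm_num)).mpr h3s)
    have : 3 ^ (n + 1) ∣ Nat.gcd d (q - 1) := by
      rw [hds] at h3d
      exact hcop.dvd_of_dvd_mul_right h3d
    exact hnq1 (dvd_trans this (Nat.gcd_dvd_right _ _))
  -- case analysis on s
  obtain ⟨t, hst⟩ := h3s
  have hs0 : s ≠ 0 := by
    intro h0
    rw [h0] at hsj
    exact absurd (Nat.eq_zero_of_zero_dvd hsj) (by omega)
  have ht0 : t ≠ 0 := by rintro rfl; omega
  rcases eq_or_ne t 1 with rfl | ht1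
  · -- s = 3 : X^3 lies in F_q, contradiction
    apply xcube_not hx hrec hirr hn
    have hs3 : s = 3 := by omega
    have hu3 : u ^ 3 = 1 := by rw [← hs3, hs]; exact pow_orderOf_eq_one u
    have h31 : (X ^ 3) ^ (q - 1) = 1 := by
      rw [hu, ← pow_mul] at hu3
      rw [← pow_mul, mul_comm]
      exact hu3
    have hfix : (X ^ 3) ^ q = X ^ 3 := by
      have h2 : (X ^ 3) ^ (q - 1 + 1) = X ^ 3 := by
        rw [pow_add, h31, one_mul, pow_one]
      rwa [(by omega : q - 1 + 1 = q)] at h2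
    show (x n ^ 3) ^ (2:ℕ) ^ (2 * 3 ^ (n-1)) = x n ^ 3
    rw [← hm, ← hq, ← hX]
    exact hfix
  · obtain ⟨ℓ, hp, hℓt⟩ := Nat.exists_prime_and_dvd ht1
    have hℓs : ℓ ∣ s := hst ▸ Dvd.dvd.mul_left hℓt 3
    rcases eq_or_ne ℓ 3 with rfl | hℓ3
    · -- 9 ∣ s ∣ Q but Q % 9 = 3
      have h9s : 9 ∣ s := by
        obtain ⟨r, hr⟩ := hℓt
        rw [hst, hr]
        exact ⟨r, by ring⟩
      have h9Q : 9 ∣ Q := dvd_trans h9s hsQ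
      have hq9 : q % 9 = 1 := by
        rw [hq4]
        exact Aux2.four_pow_mod9 (by omega)
      obtain ⟨b, hb⟩ : ∃ b, q = 9 * b + 1 := ⟨q / 9, by omega⟩
      have hQb : Q = 9 * (9 * (b * b) + 3 * b) + 3 := by rw [hQ, hb]; ring
      rw [hQb] at h9Q
      set D := 9 * (b * b) + 3 * b with hD
      omega
    · -- big prime case
      have hℓQ : ℓ ∣ Q := dvd_trans hℓs hsQ
      have hℓ1 : ℓ ∣ 2 ^ (2 * 3 ^ n) - 1 := by
        refine dvd_trans hℓQ ?_
        rw [← hq3, ← hQfac]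
        exact Dvd.dvd.mul_left dvd_rfl (q-1)
      have hℓ2 : ¬ ℓ ∣ 2 ^ (2 * 3 ^ (n - 1)) - 1 := by
        intro hcon
        have hQid : Q = (q + 2) * (q - 1) + 3 := by
          rw [hQ]; exact Aux2.qid q (by omega)
        have hℓq1 : ℓ ∣ q - 1 := by rwa [← hm, ← hq] at hcon
        have : ℓ ∣ 3 := by
          have h1 : ℓ ∣ (q + 2) * (q - 1) := Dvd.dvd.mul_left hℓq1 _
          have h2 : ℓ ∣ (q + 2) * (q - 1) + 3 := hQid ▸ hℓQ
          exact (Nat.dvd_add_right h1).mp h2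
        exact hℓ3 ((Nat.prime_dvd_prime_iff_eq hp (by norm_num)).mp this)
      have hbig : 2 * 3 ^ n + 1 ≤ ℓ := Aux2.ell_big hp (by omega) hℓ1 hℓ2
      have h3ℓ : 3 * ℓ ∣ s :=
        Nat.Coprime.mul_dvd_of_dvd_of_dvd
          ((Nat.coprime_primes (by norm_num) hp).mpr (Ne.symm hℓ3)) ⟨t, hst⟩ hℓs
      have h3ℓle : 3 * ℓ ≤ s := Nat.le_of_dvd (by omega) h3ℓ
      have hP : (3:ℕ) ^ (n + 1) = 3 * 3 ^ n := by rw [pow_succ]; ring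
      omega

end

section
variable {e : ℕ} {x : ℕ → Ω}

lemma desc (hx : ∀ k, 1 ≤ k → LiesIn (2 * 3 ^ k) (x k))
    (hrec : ∀ k, 2 ≤ k → (x k) ^ 3 + x k + (x (k - 1)) ^ (2 ^ e) = 0)
    (hirr : ∀ k, 2 ≤ k → ¬ LiesIn (2 * 3 ^ (k - 1)) (x k)) :
    ∀ k, 1 ≤ k → ∃ w : ℕ, x k = x (k+1) ^ w := by
  intro k hk
  set m := 2 * 3 ^ k with hm
  have hnorm := norm_eq (e := e) hx hrec hirr (k := k + 1) (by omega)
  simp only [Nat.add_sub_cancel] at hnorm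
  have hLme : x k ^ (2:ℕ) ^ (m * (e + 1)) = x k := Aux.L_mul_exp (hx k hk)
  set P := m * (e + 1) with hP
  have hm0 : 0 < m := by rw [hm]; positivity
  have hme : P ≥ e + 1 := by
    rw [hP]
    exact Nat.le_mul_of_pos_left (e+1) hm0
  clear_value P
  refine ⟨(1 + 2 ^ m + 2 ^ m * 2 ^ m) * 2 ^ (P - e), ?_⟩
  rw [pow_mul, hnorm, ← pow_mul, ← pow_add]
  have hthis : e + (P - e) = P := by omega
  rw [hthis]
  exact hLme.symm

lemma exp_step (k : ℕ) : ((k+1)*(k+1) + 3*(k+1))/2 = (k*k + 3*k)/2 + (k+2) := by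
  have heven : 2 ∣ k*k + 3*k := by
    rcases Nat.even_or_odd k with ⟨c, rfl⟩ | ⟨c, rfl⟩
    · have h : (c+c)*(c+c) + 3*(c+c) = 2*(2*(c*c) + 3*c) := by ring
      omega
    · have h : (2*c+1)*(2*c+1) + 3*(2*c+1) = 2*(2*(c*c) + 5*c + 2) := by ring
      omega
  have hring : (k+1)*(k+1) + 3*(k+1) = k*k + 3*k + (2*k+4) := by ring
  omega

lemma count (hx : ∀ k, 1 ≤ k → LiesIn (2 * 3 ^ k) (x k))
    (hrec : ∀ k, 2 ≤ k → (x k) ^ 3 + x k + (x (k - 1)) ^ (2 ^ e) = 0)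
    (hirr : ∀ k, 2 ≤ k → ¬ LiesIn (2 * 3 ^ (k - 1)) (x k))
    (hx1 : x 1 ≠ 0)
    (hcube : ¬ ∃ y : Ω, y ^ (2 ^ 6) = y ∧ y ^ 3 = x 1) :
    ∀ k, 1 ≤ k → ∃ g : ℕ → ℕ,
      ∀ a b : ℕ, a < 3 ^ ((k*k + 3*k)/2) → b < 3 ^ ((k*k + 3*k)/2) →
        x k ^ g a = x k ^ g b → a = b := by
  intro k hk
  induction k, hk using Nat.le_induction with
  | base =>
    refine ⟨id, ?_⟩
    have hbase : ∀ a b : ℕ, a ≤ b → b < 9 → x 1 ^ a = x 1 ^ b → a = b := by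
      intro a b hab hb9 heq
      have h1 : x 1 ^ a * x 1 ^ (b - a) = x 1 ^ a * 1 := by
        rw [← pow_add, mul_one, (by omega : a + (b - a) = b)]
        exact heq.symm
      have h2 : x 1 ^ (b - a) = 1 := mul_left_cancel₀ (pow_ne_zero _ hx1) h1
      have h3 : orderOf (x 1) ∣ b - a := orderOf_dvd_of_pow_eq_one h2
      have h9 : (9:ℕ) ∣ orderOf (x 1) := by
        have h := three_pow_dvd hx hrec hirr hx1 hcube 1 le_rfl
        norm_num at h
        exact h
      have := dvd_trans h9 h3
      omega
    intro a b ha hb heq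
    norm_num at ha hb
    rcases Nat.le_total a b with h | h
    · exact hbase a b h hb heq
    · exact (hbase b a h ha heq.symm).symm
  | succ k hk ih =>
    obtain ⟨g, hg⟩ := ih
    obtain ⟨w, hw⟩ := desc (e := e) hx hrec hirr k hk
    set N := (3:ℕ) ^ ((k*k + 3*k)/2) with hN
    have hNpos : 0 < N := by rw [hN]; positivity
    have hxk0 : x k ≠ 0 := xne hirr hx1 k hk
    have hXk1 : x (k+1) ≠ 0 := xne hirr hx1 (k+1) (by omega)
    refine ⟨fun a => (a / N) + w * g (a % N), ?_⟩
    intro a b ha hb hab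
    have hNsucc : (3:ℕ) ^ (((k+1)*(k+1) + 3*(k+1))/2) = N * 3 ^ (k+2) := by
      rw [exp_step, pow_add, hN]
    rw [hNsucc] at ha hb
    have expand : ∀ c : ℕ, x (k+1) ^ (c / N + w * g (c % N))
        = x (k+1) ^ (c / N) * x k ^ g (c % N) := by
      intro c
      rw [pow_add, hw, ← pow_mul]
    have key : x (k+1) ^ (a / N) * x k ^ g (a % N)
        = x (k+1) ^ (b / N) * x k ^ g (b % N) := by
      rw [← expand, ← expand]
      exact hab
    have main : ∀ u u' A B, u ≤ u' → u' < 3 ^ (k+2) → A ≠ 0 → B ≠ 0 →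
        LiesIn (2 * 3 ^ k) A → LiesIn (2 * 3 ^ k) B →
        x (k+1) ^ u * A = x (k+1) ^ u' * B → u = u' ∧ A = B := by
      intro u u' A B huu hu' hA0 hB0 hAF hBF heq
      have hd : u' = u + (u' - u) := by omega
      rw [hd, pow_add, mul_assoc] at heq
      have heq2 : A = x (k+1) ^ (u' - u) * B :=
        mul_left_cancel₀ (pow_ne_zero _ hXk1) heq
      by_cases h0 : u' - u = 0
      · refine ⟨by omega, ?_⟩
        rw [h0, pow_zero, one_mul] at heq2
        exact heq2
      · exfalso
        have hABinv : x (k+1) ^ (u' - u) = A * B⁻¹ := by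
          rw [heq2, mul_assoc, mul_inv_cancel₀ hB0, mul_one]
        have hpowF : LiesIn (2 * 3 ^ k) (x (k+1) ^ (u' - u)) := by
          rw [hABinv]
          exact Aux.L_mul hAF (Aux.L_inv hBF)
        have hDk := hD (e := e) hx hrec hirr hx1 hcube (k+1) (by omega) (u' - u)
          (by omega) (by show u' - u < 3 ^ (k + 2); omega)
        simp only [Nat.add_sub_cancel] at hDk
        exact hDk hpowF
    have hmodb : ∀ c : ℕ, c % N < N := fun c => Nat.mod_lt _ hNpos
    have hdivb : ∀ c : ℕ, c < N * 3 ^ (k+2) → c / N < 3 ^ (k+2) := by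
      intro c hc
      exact (Nat.div_lt_iff_lt_mul hNpos).mpr (by rwa [mul_comm] at hc)
    have hsame : a / N = b / N ∧ x k ^ g (a % N) = x k ^ g (b % N) := by
      rcases Nat.le_total (a / N) (b / N) with h | h
      · exact main _ _ _ _ h (hdivb b hb) (pow_ne_zero _ hxk0) (pow_ne_zero _ hxk0)
          (Aux.L_pow (hx k hk)) (Aux.L_pow (hx k hk)) key
      · have h2 := main _ _ _ _ h (hdivb a ha) (pow_ne_zero _ hxk0) (pow_ne_zero _ hxk0)
          (Aux.L_pow (hx k hk)) (Aux.L_pow (hx k hk)) key.symm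
        exact ⟨h2.1.symm, h2.2.symm⟩
    have hmod : a % N = b % N := hg _ _ (hmodb a) (hmodb b) hsame.2
    have hda := Nat.div_add_mod a N
    have hdb := Nat.div_add_mod b N
    rw [hsame.1, hmod] at hda
    omega

end
end Main

theorem stmt_8 (e : ℕ) (x : ℕ → Ω)
    (hx : ∀ k, 1 ≤ k → LiesIn (2 * 3 ^ k) (x k))
    (hrec : ∀ k, 2 ≤ k → (x k) ^ 3 + x k + (x (k - 1)) ^ (2 ^ e) = 0)
    (hirr : ∀ k, 2 ≤ k → ¬ LiesIn (2 * 3 ^ (k - 1)) (x k))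
    (hx1 : x 1 ≠ 0)
    (hcube : ¬ ∃ y : Ω, y ^ (2 ^ 6) = y ∧ y ^ 3 = x 1) :
    ∀ n, 2 ≤ n → ¬ LiesIn (2 * 3 ^ (n - 1)) ((x n) ^ 3) ∧
      orderOf (x n) > 3 ^ ((n ^ 2 + 3 * n) / 2 - 1) := by
  intro n hn
  constructor
  · exact Main.xcube_not hx hrec hirr hn
  · obtain ⟨g, hg⟩ := Main.count hx hrec hirr hx1 hcube n (by omega)
    set d := orderOf (x n) with hdd
    have hxn0 : x n ≠ 0 := Main.xne hirr hx1 n (by omega)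
    have h1le : (1:ℕ) ≤ 2 ^ (2 * 3 ^ n) := Nat.one_le_two_pow
    have hfin : x n ^ (2 ^ (2 * 3 ^ n) - 1) = 1 := Main.unit_of_LiesIn hxn0 (hx n (by omega))
    have hd0 : d ≠ 0 := by
      intro h0
      have hdvd := orderOf_dvd_of_pow_eq_one hfin
      rw [← hdd, h0] at hdvd
      have := Nat.eq_zero_of_zero_dvd hdvd
      have h2lt : (2:ℕ) ≤ 2 ^ (2 * 3 ^ n) := by
        have h := Nat.one_lt_two_pow_iff (n := 2 * 3 ^ n) |>.mpr (by positivity)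
        omega
      omega
    haveI : NeZero d := ⟨hd0⟩
    have hinj : Function.Injective
        (fun a : Fin (3 ^ ((n*n + 3*n)/2)) => ((g a : ℕ) : ZMod d)) := by
      intro a b hab
      have hmod : (g a) ≡ (g b) [MOD d] := (ZMod.natCast_eq_natCast_iff _ _ _).mp hab
      have hpow : x n ^ g a = x n ^ g b := Aux2.pow_congr (z := x n) (hdd ▸ hmod)
      exact Fin.ext (hg a b a.isLt b.isLt hpow)
    have hcard := Fintype.card_le_of_injective _ hinj
    rw [Fintype.card_fin, ZMod.card] at hcard
    have hsq : n ^ 2 = n * n := pow_two n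
    have hEge : 1 ≤ (n ^ 2 + 3 * n) / 2 := by
      have h4 : 4 ≤ n * n := Nat.mul_le_mul hn hn
      omega
    calc 3 ^ ((n ^ 2 + 3 * n) / 2 - 1) < 3 ^ ((n ^ 2 + 3 * n) / 2) :=
        Nat.pow_lt_pow_right (by norm_num) (by omega)
      _ = 3 ^ ((n * n + 3 * n) / 2) := by rw [hsq]
      _ ≤ d := hcard
end

section
/- Let e ≥ 0 and n ≥ 2 be integers. Let w ∈ Ω lie in GF(2, 2·3^(n-1)); let u ∈ Ω be nonzero with u³ lying in GF(2, 2·3^(n-1)) and (u³)² + w^(2^e)·(u³) + 1 = 0; and assume that x := u + u⁻¹ does not lie in GF(2, 2·3^(n-1)) (x is then a root of Y³ + Y + w^(2^e)). Let u' ∈ Ω satisfy (u')³ = u^(2^e) (so u' ≠ 0). Then: (i) u' does not lie in GF(2, 2·3^n); (ii) ((u')³)² + x^(2^e)·((u')³) + 1 = 0, and also (((u')⁻¹)³)² + x^(2^e)·(((u')⁻¹)³) + 1 = 0; and (iii) x' := u' + (u')⁻¹ satisfies (x')³ + x' + x^(2^e) = 0 and x' does not lie in GF(2, 2·3^n). 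-/
lemma cube_fact (q : ℕ) (hq : 1 ≤ q) : q^3 - 1 = (q-1)*(q^2+q+1) := by
  obtain ⟨r, rfl⟩ : ∃ r, q = r+1 := ⟨q-1, by omega⟩
  simp only [Nat.add_sub_cancel]
  exact Nat.sub_eq_of_eq_add (by ring)

lemma six_fact (q : ℕ) (hq : 1 ≤ q) : q^6 - 1 = (q-1)*(q^5+q^4+q^3+q^2+q+1) := by
  obtain ⟨r, rfl⟩ : ∃ r, q = r+1 := ⟨q-1, by omega⟩
  simp only [Nat.add_sub_cancel]
  exact Nat.sub_eq_of_eq_add (by ring)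

lemma roots_quad (v b : Ω) (hv : v ≠ 0) (hb : b ≠ 0) (hvv : v + v⁻¹ = b + b⁻¹) :
    v = b ∨ v = b⁻¹ := by
  have hfac : (v - b) * (v - b⁻¹) = 0 := by
    field_simp at hvv ⊢
    linear_combination hvv
  rcases mul_eq_zero.1 hfac with h | h
  · exact Or.inl (sub_eq_zero.1 h)
  · exact Or.inr (sub_eq_zero.1 h)

lemma order_three (z : Ω) (h3 : z^3 = 1) (h1 : z ≠ 1) (k : ℕ) (hk : ¬ 3 ∣ k) : z^k ≠ 1 := by
  intro hzk
  have ho := orderOf_dvd_of_pow_eq_one h3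
  rcases Nat.Prime.eq_one_or_self_of_dvd (by norm_num) _ ho with h | h
  · exact h1 (orderOf_eq_one_iff.1 h)
  · exact hk (h ▸ orderOf_dvd_of_pow_eq_one hzk)

theorem stmt_17 (e n : ℕ) (hn : 2 ≤ n) (w u u' : Ω)
    (hw : LiesIn (2 * 3 ^ (n - 1)) w)
    (hu : u ≠ 0)
    (hu3 : LiesIn (2 * 3 ^ (n - 1)) (u ^ 3))
    (hquad : (u ^ 3) ^ 2 + w ^ (2 ^ e) * u ^ 3 + 1 = 0)
    (hx : ¬ LiesIn (2 * 3 ^ (n - 1)) (u + u⁻¹))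
    (hu' : u' ^ 3 = u ^ (2 ^ e)) :
    ¬ LiesIn (2 * 3 ^ n) u' ∧
    ((u' ^ 3) ^ 2 + (u + u⁻¹) ^ (2 ^ e) * u' ^ 3 + 1 = 0 ∧
      ((u'⁻¹) ^ 3) ^ 2 + (u + u⁻¹) ^ (2 ^ e) * (u'⁻¹) ^ 3 + 1 = 0) ∧
    ((u' + u'⁻¹) ^ 3 + (u' + u'⁻¹) + (u + u⁻¹) ^ (2 ^ e) = 0 ∧
      ¬ LiesIn (2 * 3 ^ n) (u' + u'⁻¹)) := by
  have h2 : (2:Ω) = 0 := by exact_mod_cast CharP.cast_eq_zero Ω 2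
  set m := 2 * 3 ^ (n - 1) with hmdef
  obtain ⟨q, hq⟩ : ∃ q, 2^m = q := ⟨_, rfl⟩
  have hq1 : 1 ≤ q := hq ▸ Nat.one_le_two_pow
  -- number theory
  have hm6 : 6 ∣ m := by
    refine ⟨3^(n-2), ?_⟩
    have h1 : n - 1 = (n-2)+1 := by omega
    rw [hmdef, h1, pow_succ]; ring
  have hq9 : q % 9 = 1 := by
    obtain ⟨k, hk⟩ := hm6
    rw [← hq, hk, pow_mul, Nat.pow_mod]
    norm_num
  have hqM : q ≡ 1 [MOD 9] := by simpa [Nat.ModEq] using hq9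
  obtain ⟨M, hM1, hM3⟩ : ∃ M, q^2+q+1 = 3*M ∧ ¬ 3 ∣ M := by
    have h9 : (q^2+q+1) % 9 = 3 := by
      have := ((hqM.pow 2).add hqM).add_right 1
      simpa [Nat.ModEq] using this
    obtain ⟨X, hX9, hX⟩ : ∃ X, X % 9 = 3 ∧ q^2+q+1 = X := ⟨_, h9, rfl⟩
    exact ⟨X/3, by omega, by omega⟩
  obtain ⟨T, hT1, hT3⟩ : ∃ T, q^5+q^4+q^3+q^2+q+1 = 3*T ∧ ¬ 3 ∣ T := by
    have h9 : (q^5+q^4+q^3+q^2+q+1) % 9 = 6 := by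
      have := (((((hqM.pow 5).add (hqM.pow 4)).add (hqM.pow 3)).add (hqM.pow 2)).add hqM).add_right 1
      simpa [Nat.ModEq] using this
    obtain ⟨X, hX9, hX⟩ : ∃ X, X % 9 = 6 ∧ q^5+q^4+q^3+q^2+q+1 = X := ⟨_, h9, rfl⟩
    exact ⟨X/3, by omega, by omega⟩
  have hK : 2 * 3 ^ n = m * 3 := by
    conv_lhs => rw [show n = (n-1)+1 from by omega]
    rw [hmdef, pow_succ]; ring
  have hq3 : q^3 = 2^(2*3^n) := by rw [hK, pow_mul, hq]
  -- basic element facts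
  have hu'0 : u' ≠ 0 := by
    intro h
    apply hu
    have h0 : u ^ (2^e) = 0 := by rw [← hu', h]; simp
    exact (pow_eq_zero_iff (a := u) (n := 2^e) (by positivity : (0:ℕ) < 2^e).ne').1 h0
  have hu3' : (u^3)^q = u^3 := by rw [← hq]; exact hu3
  -- zeta
  set z := u ^ (q-1) with hzdef
  have hz3 : z ^ 3 = 1 := by
    have h1 : (u^3)^(q-1) * (u^3) = u^3 := by
      rw [← pow_succ, Nat.sub_add_cancel hq1, hu3']
    have h1' : (u^3)^(q-1) = 1 :=
      mul_right_cancel₀ (pow_ne_zero 3 hu) (by rw [h1, one_mul])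
    calc z^3 = u^((q-1)*3) := by rw [hzdef, ← pow_mul]
    _ = (u^3)^(q-1) := by rw [mul_comm, pow_mul]
    _ = 1 := h1'
  have hz1 : z ≠ 1 := by
    intro h
    apply hx
    have huq : u ^ q = u := by
      have h' : u ^ (q-1) * u = u := by
        rw [hzdef] at h; rw [h, one_mul]
      rw [← pow_succ, Nat.sub_add_cancel hq1] at h'
      exact h'
    show (u + u⁻¹) ^ (2^m) = u + u⁻¹
    rw [add_pow_char_pow, inv_pow, hq, huq]
  have key2 : ∀ c : ℕ, u' ^ (3*((q-1)*c)) = 1 → 3 ∣ c := by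
    intro c hc
    have : z ^ (2^e * c) = 1 := by
      rw [hzdef, ← pow_mul]
      calc u ^ ((q-1) * (2^e * c)) = (u^(2^e))^((q-1)*c) := by
            rw [← pow_mul]; congr 1; ring
      _ = (u'^3)^((q-1)*c) := by rw [hu']
      _ = 1 := by rw [← pow_mul]; exact hc
    by_contra h3c
    exact order_three z hz3 hz1 _ (by
      intro hd
      exact h3c ((Nat.Coprime.dvd_of_dvd_mul_left (Nat.Coprime.pow_right e (by norm_num)) hd))) this
  -- part (a)
  have parta : ¬ LiesIn (2 * 3 ^ n) u' := by
    intro h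
    have h' : u' ^ (q^3) = u' := by rw [hq3]; exact h
    have h1 : u' ^ (q^3-1) = 1 := by
      refine mul_right_cancel₀ hu'0 ?_
      rw [one_mul, ← pow_succ, Nat.sub_add_cancel (Nat.one_le_pow _ _ (by omega)), h']
    have heq : q^3 - 1 = 3*((q-1)*M) := by
      rw [cube_fact q hq1, hM1]; ring
    rw [heq] at h1
    exact hM3 (key2 M h1)
  -- Frobenius image v of u'
  refine ⟨parta, ?_, ?_, ?_⟩
  · constructor
    · rw [hu', add_pow_char_pow, inv_pow]
      set a := u ^ (2^e) with hadef
      have ha : a ≠ 0 := pow_ne_zero _ hu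
      field_simp
      linear_combination (a^2+1) * h2
    · rw [inv_pow, hu', add_pow_char_pow, inv_pow]
      set a := u ^ (2^e) with hadef
      have ha : a ≠ 0 := pow_ne_zero _ hu
      field_simp
      have hinv : a * (1/u)^2^e = 1 := by rw [one_div, inv_pow]; exact mul_inv_cancel₀ ha
      linear_combination hinv + (a^2+1) * h2
  · rw [add_pow_char_pow, inv_pow, ← hu']
    have hb : u' ≠ 0 := hu'0
    field_simp
    linear_combination (u'^6+2*u'^4+2*u'^2+1) * h2
  · intro h
    have hx' : (u' + u'⁻¹) ^ (2^(2*3^n)) = u' + u'⁻¹ := h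
    set v := u' ^ (2^(2*3^n)) with hvdef
    have hv0 : v ≠ 0 := pow_ne_zero _ hu'0
    have hvv : v + v⁻¹ = u' + u'⁻¹ := by
      rw [hvdef, ← inv_pow, ← add_pow_char_pow]
      exact hx'
    have h6 : u' ^ (q^6) = u' := by
      have hsq : u' ^ (q^6) = v ^ (2^(2*3^n)) := by
        rw [hvdef, ← pow_mul, ← pow_add]
        congr 1
        rw [pow_add, ← hq3]; ring
      rcases roots_quad v u' hv0 hu'0 hvv with hcase | hcase
      · calc u' ^ (q^6) = v ^ (2^(2*3^n)) := hsq
          _ = u' ^ (2^(2*3^n)) := by rw [hcase]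
          _ = v := hvdef.symm
          _ = u' := hcase
      · calc u' ^ (q^6) = v ^ (2^(2*3^n)) := hsq
          _ = (u'⁻¹) ^ (2^(2*3^n)) := by rw [hcase]
          _ = (u' ^ (2^(2*3^n)))⁻¹ := by rw [inv_pow]
          _ = v⁻¹ := by rw [← hvdef]
          _ = u' := by rw [hcase, inv_inv]
    have h1 : u' ^ (q^6-1) = 1 := by
      refine mul_right_cancel₀ hu'0 ?_
      rw [one_mul, ← pow_succ, Nat.sub_add_cancel (Nat.one_le_pow _ _ (by omega)), h6]
    have heq : q^6 - 1 = 3*((q-1)*T) := by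
      rw [six_fact q hq1, hT1]; ring
    rw [heq] at h1
    exact hT3 (key2 T h1)
end

section
/- Let e ≥ 0 and n ≥ 1 be integers and let w ∈ Ω lie in GF(2, 2·3^(n-1)). Suppose that every root of Y³ + Y + w^(2^e) lies in GF(2, 2·3^n), i.e. every z ∈ Ω with z³ + z + w^(2^e) = 0 satisfies z^(2^(2·3^n)) = z. Let x ∈ Ω be any such root, i.e. x³ + x + w^(2^e) = 0. Then every root of Y³ + Y + x^(2^e) lies in GF(2, 2·3^(n+1)), i.e. every z ∈ Ω with z³ + z + x^(2^e) = 0 satisfies z^(2^(2·3^(n+1))) = z. -/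
lemma two_eq_zeroΩ : (2 : Ω) = 0 := by
  have : (2 : Ω) = ((2 : ℕ) : Ω) := by norm_num
  rw [this, CharP.cast_eq_zero_iff Ω 2 2]

lemma add_eq_zero_iffΩ (a b : Ω) : a + b = 0 ↔ a = b := by
  constructor
  · intro h; rw [eq_neg_of_add_eq_zero_left h, CharTwo.neg_eq]
  · intro h; rw [h, CharTwo.add_self_eq_zero]

/-- The "trace" map `a ↦ ∑_{i<m} a^(2^i)`. -/
noncomputable def TrΩ (m : ℕ) (a : Ω) : Ω := ∑ i ∈ Finset.range m, a ^ (2 ^ i)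

lemma TrΩ_add (m : ℕ) (a b : Ω) : TrΩ m (a + b) = TrΩ m a + TrΩ m b := by
  unfold TrΩ
  rw [← Finset.sum_add_distrib]
  exact Finset.sum_congr rfl fun i _ => add_pow_char_pow a b 2 i

lemma TrΩ_AS (m : ℕ) (u : Ω) : TrΩ m (u ^ 2 + u) = u ^ (2 ^ m) + u := by
  unfold TrΩ
  have h : ∀ i : ℕ, (u ^ 2 + u) ^ (2 ^ i)
      = (fun j => u ^ (2 ^ j)) (i + 1) - (fun j => u ^ (2 ^ j)) i := by
    intro i
    simp only
    rw [add_pow_char_pow (u ^ 2) u 2 i, CharTwo.sub_eq_add, ← pow_mul]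
    congr 2
    ring
  calc (∑ i ∈ Finset.range m, (u ^ 2 + u) ^ (2 ^ i))
      = ∑ i ∈ Finset.range m,
          ((fun j => u ^ (2 ^ j)) (i + 1) - (fun j => u ^ (2 ^ j)) i) :=
        Finset.sum_congr rfl fun i _ => h i
    _ = u ^ (2 ^ m) - u ^ (2 ^ 0) := Finset.sum_range_sub (fun j => u ^ (2 ^ j)) m
    _ = u ^ (2 ^ m) + u := by rw [CharTwo.sub_eq_add, pow_zero, pow_one]

lemma TrΩ_sq (m : ℕ) (a : Ω) (ha : a ^ (2 ^ m) = a) : TrΩ m (a ^ 2) = TrΩ m a := by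
  have h1 : a ^ 2 = (a ^ 2 + a) + a := by
    linear_combination (-a) * two_eq_zeroΩ
  rw [h1, TrΩ_add, TrΩ_AS, ha, CharTwo.add_self_eq_zero, zero_add]

lemma TrΩ_one (m : ℕ) (hm : Even m) : TrΩ m 1 = 0 := by
  unfold TrΩ
  simp only [one_pow, Finset.sum_const, Finset.card_range, nsmul_eq_mul, mul_one]
  exact (CharP.cast_eq_zero_iff Ω 2 m).2 hm.two_dvd

lemma TrΩ_frob (m : ℕ) (a : Ω) (ha : a ^ (2 ^ m) = a) (e : ℕ) :
    TrΩ m (a ^ (2 ^ e)) = TrΩ m a := by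
  induction e with
  | zero => simp
  | succ e ih =>
    have hK : (a ^ (2 ^ e)) ^ (2 ^ m) = a ^ (2 ^ e) := by
      rw [pow_right_comm, ha]
    have h2 : a ^ (2 ^ (e + 1)) = (a ^ (2 ^ e)) ^ 2 := by
      rw [pow_succ, pow_mul]
    rw [h2, TrΩ_sq m _ hK]
    exact ih

lemma exists_AS (d : Ω) : ∃ u : Ω, u ^ 2 + u + d = 0 := by
  have := IsAlgClosed.exists_root (k := Ω)
    (Polynomial.X ^ 2 + Polynomial.X + Polynomial.C d) ?_
  · obtain ⟨u, hu⟩ := this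
    refine ⟨u, ?_⟩
    simp [Polynomial.IsRoot] at hu
    linear_combination hu
  · intro hdeg
    have h2 : (Polynomial.X ^ 2 + Polynomial.X + Polynomial.C d :
        Polynomial Ω).degree = 2 := by compute_degree!
    rw [hdeg] at h2; simp at h2

lemma trace_root (m : ℕ) (hm : Even m) (c x : Ω) (hx : x ^ 3 + x + c = 0)
    (hx0 : x ≠ 0) (hsplit : ∀ y : Ω, y ^ 3 + y + c = 0 → y ^ (2 ^ m) = y) :
    TrΩ m x⁻¹ = 0 := by
  have hxK : x ^ (2 ^ m) = x := hsplit x hx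
  obtain ⟨u, hu⟩ := exists_AS (1 + (x⁻¹) ^ 2)
  have hxi : x * x⁻¹ = 1 := mul_inv_cancel₀ hx0
  set x' := u * x with hx'
  have hq : x' ^ 2 + x * x' + x ^ 2 + 1 = 0 := by
    rw [hx']
    linear_combination x ^ 2 * hu - (x * x⁻¹ + 1) * hxi
  have hx'root : x' ^ 3 + x' + c = 0 := by
    linear_combination (x' - x) * hq + hx
  have hx'K : x' ^ (2 ^ m) = x' := hsplit x' hx'root
  have huK : u ^ (2 ^ m) = u := by
    have h1 : u = x' * x⁻¹ := by rw [hx']; field_simp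
    rw [h1, mul_pow, hx'K, inv_pow, hxK]
  have h1 : TrΩ m (u ^ 2 + u) = 0 := by
    rw [TrΩ_AS, huK, CharTwo.add_self_eq_zero]
  have h2 : u ^ 2 + u = 1 + (x⁻¹) ^ 2 := by
    linear_combination hu - (1 + (x⁻¹) ^ 2) * two_eq_zeroΩ
  have hxiK : (x⁻¹) ^ (2 ^ m) = x⁻¹ := by rw [inv_pow, hxK]
  rw [h2, TrΩ_add, TrΩ_one m hm, zero_add, TrΩ_sq m x⁻¹ hxiK] at h1
  exact h1

lemma frob_injΩ (M : ℕ) (hM : M ≠ 0) (u v : Ω) (h : u ^ M = v ^ M)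
    (hMp : ∃ k, M = 2 ^ k) : u = v := by
  obtain ⟨k, rfl⟩ := hMp
  have h0 : (u - v) ^ (2 ^ k) = 0 := by
    rw [sub_pow_char_pow, h, sub_self]
  exact sub_eq_zero.1 (pow_eq_zero_iff hM |>.1 h0)

set_option maxHeartbeats 1600000 in
lemma key_s18 (m : ℕ) (hm : Even m) (c : Ω) (hc : c ≠ 0) (hcK : c ^ (2 ^ m) = c)
    (hTc : TrΩ m c⁻¹ = 0) (z : Ω) (hz : z ^ 3 + z + c = 0) :
    ((z ^ (2 ^ m)) ^ (2 ^ m)) ^ (2 ^ m) = z := by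
  have htwo := two_eq_zeroΩ
  obtain ⟨M, hM⟩ : ∃ M, 2 ^ m = M := ⟨_, rfl⟩
  rw [hM] at hcK ⊢
  have hMne : M ≠ 0 := by rw [← hM]; positivity
  have hfrob_add : ∀ u v : Ω, (u + v) ^ M = u ^ M + v ^ M := by
    intro u v; rw [← hM]; exact add_pow_char_pow u v 2 m
  have hfrob_cm : ∀ (u : Ω) (k : ℕ), (u ^ k) ^ M = (u ^ M) ^ k := by
    intro u k; rw [← pow_mul, mul_comm, pow_mul]
  have hroot : ∀ y : Ω, y ^ 3 + y + c = 0 → (y ^ M) ^ 3 + y ^ M + c = 0 := by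
    intro y hy
    have h0 : (y ^ 3 + y + c) ^ M = 0 := by rw [hy, zero_pow hMne]
    calc (y ^ M) ^ 3 + y ^ M + c
        = (y ^ 3) ^ M + y ^ M + c ^ M := by rw [hcK, hfrob_cm]
      _ = (y ^ 3 + y + c) ^ M := by
          rw [hfrob_add (y ^ 3 + y) c, hfrob_add (y ^ 3) y]
      _ = 0 := h0
  by_cases h : z ^ M = z
  · rw [h, h, h]
  obtain ⟨a, ha⟩ : ∃ a, z ^ M = a := ⟨_, rfl⟩
  rw [ha]
  rw [ha] at h
  have haroot : a ^ 3 + a + c = 0 := by rw [← ha]; exact hroot z hz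
  have hquad : a ^ 2 + z * a + z ^ 2 + 1 = 0 := by
    have hmul : (a - z) * (a ^ 2 + z * a + z ^ 2 + 1) = 0 := by
      linear_combination haroot - hz
    rcases mul_eq_zero.1 hmul with h1 | h1
    · exact absurd (sub_eq_zero.1 h1) h
    · exact h1
  obtain ⟨b, hb⟩ : ∃ b, a ^ M = b := ⟨_, rfl⟩
  rw [hb]
  have hbroot : b ^ 3 + b + c = 0 := by rw [← hb]; exact hroot a haroot
  have hbcases : (b - z) * (b - a) * (b - (-(z + a))) = 0 := by
    linear_combination hbroot + (z - b) * hquad - hz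
  rcases mul_eq_zero.1 hbcases with h12 | hbt
  · rcases mul_eq_zero.1 h12 with hbz | hba
    · -- bad case b = z : derive a contradiction via the trace
      exfalso
      have hbz' : b = z := sub_eq_zero.1 hbz
      obtain ⟨t, ht⟩ : ∃ t, z + a = t := ⟨_, rfl⟩
      have httroot : t ^ 3 + t + c = 0 := by
        linear_combination (-(t ^ 2 + t * (z + a) + (z + a) ^ 2 + 1)) * ht
          + (-2) * hz + haroot + 3 * z * hquad + c * htwo
      have htM : t ^ M = t := by
        rw [← ht, hfrob_add, ha, hb, hbz']
        exact add_comm a z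
      have ht0 : t ≠ 0 := by
        intro h0
        rw [← ht] at h0
        exact h ((add_eq_zero_iffΩ z a).1 h0).symm
      have htc1 : t ≠ 1 := by
        intro h1
        apply hc
        rw [h1] at httroot
        linear_combination httroot - htwo
      have ht1 : t + 1 ≠ 0 := fun h1 => htc1 ((add_eq_zero_iffΩ t 1).1 h1)
      have hcfac : c = t * (t + 1) ^ 2 := by
        linear_combination httroot - (t ^ 3 + t ^ 2 + t) * htwo
      have hcinv : c⁻¹ = t⁻¹ * ((t + 1)⁻¹) ^ 2 := by
        rw [hcfac, mul_inv, inv_pow]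
      have hsK : ((t + 1)⁻¹) ^ (2 ^ m) = (t + 1)⁻¹ := by
        rw [hM, inv_pow, hfrob_add, htM, one_pow]
      have hTrt : TrΩ m t⁻¹ = 0 := by
        have hid : t⁻¹ = c⁻¹ + ((t + 1)⁻¹ + ((t + 1)⁻¹) ^ 2) := by
          rw [hcinv]
          field_simp
          ring
        rw [hid, TrΩ_add, hTc, zero_add, TrΩ_add,
          TrΩ_sq m ((t + 1)⁻¹) hsK, CharTwo.add_self_eq_zero]
      have hquad_t : z ^ 2 + t * z + t ^ 2 + 1 = 0 := by
        linear_combination (-(2 * z + t + a)) * ht + hquad + (z ^ 2 + a * z) * htwo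
      have hu2 : (z * t⁻¹) ^ 2 + (z * t⁻¹) = 1 + (t⁻¹) ^ 2 := by
        field_simp
        linear_combination hquad_t - (t ^ 2 + 1) * htwo
      have htiK : (t⁻¹) ^ (2 ^ m) = t⁻¹ := by rw [inv_pow, hM, htM]
      have huM : (z * t⁻¹) ^ M = z * t⁻¹ := by
        have hAS := TrΩ_AS m (z * t⁻¹)
        rw [hu2, hM] at hAS
        rw [TrΩ_add, TrΩ_one m hm, zero_add, TrΩ_sq m t⁻¹ htiK, hTrt] at hAS
        exact (add_eq_zero_iffΩ _ _).1 hAS.symm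
      have hzut : z = (z * t⁻¹) * t := by
        rw [mul_assoc, inv_mul_cancel₀ ht0, mul_one]
      have hfin : z ^ M = z := by
        conv_lhs => rw [hzut]
        rw [mul_pow, huM, htM, ← hzut]
      rw [ha] at hfin
      exact h hfin
    · -- case b = a : Frobenius injectivity gives a contradiction
      exfalso
      have hba' : b = a := sub_eq_zero.1 hba
      have : a = z := frob_injΩ M hMne a z (by rw [hb, hba']; exact ha.symm)
        ⟨m, hM.symm⟩
      exact h this
  · -- case b = -(z+a) : the Frobenius 3-cycle case
    have hbt' : b = -(z + a) := sub_eq_zero.1 hbt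
    rw [hbt', CharTwo.neg_eq, hfrob_add, ha, hb, hbt']
    linear_combination (-z) * htwo

set_option maxHeartbeats 1600000 in
theorem stmt_18 (e n : ℕ) (hn : 1 ≤ n) (w : Ω)
    (hw : LiesIn (2 * 3 ^ (n - 1)) w)
    (hsplit : ∀ z : Ω, z ^ 3 + z + w ^ (2 ^ e) = 0 → LiesIn (2 * 3 ^ n) z)
    (x : Ω) (hx : x ^ 3 + x + w ^ (2 ^ e) = 0) :
    ∀ z : Ω, z ^ 3 + z + x ^ (2 ^ e) = 0 → LiesIn (2 * 3 ^ (n + 1)) z := by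
  intro z hz
  have htwo := two_eq_zeroΩ
  set m := 2 * 3 ^ n with hm
  have hmeven : Even m := ⟨3 ^ n, by rw [hm]; ring⟩
  have hsplit' : ∀ y : Ω, y ^ 3 + y + w ^ (2 ^ e) = 0 → y ^ (2 ^ m) = y :=
    fun y hy => hsplit y hy
  have hxK : x ^ (2 ^ m) = x := hsplit' x hx
  show z ^ (2 ^ (2 * 3 ^ (n + 1))) = z
  by_cases hc : x ^ (2 ^ e) = 0
  · -- degenerate case : x = 0 and z ∈ {0, 1}
    rw [hc] at hz
    have hfac : z * (z + 1) ^ 2 = 0 := by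
      linear_combination hz + z ^ 2 * htwo
    rcases mul_eq_zero.1 hfac with h0 | h1
    · rw [h0]; exact zero_pow (by positivity)
    · have h2 : z + 1 = 0 := pow_eq_zero_iff (by norm_num) |>.1 h1
      rw [(add_eq_zero_iffΩ z 1).1 h2, one_pow]
  · have hx0 : x ≠ 0 := fun h0 => hc (by rw [h0]; exact zero_pow (by positivity))
    have hTrx : TrΩ m x⁻¹ = 0 :=
      trace_root m hmeven (w ^ (2 ^ e)) x hx hx0 hsplit'
    have hcK : (x ^ (2 ^ e)) ^ (2 ^ m) = x ^ (2 ^ e) := by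
      rw [pow_right_comm, hxK]
    have hxiK : (x⁻¹) ^ (2 ^ m) = x⁻¹ := by rw [inv_pow, hxK]
    have hTrc : TrΩ m (x ^ (2 ^ e))⁻¹ = 0 := by
      rw [← inv_pow, TrΩ_frob m x⁻¹ hxiK e]
      exact hTrx
    have hkey := key_s18 m hmeven (x ^ (2 ^ e)) hc hcK hTrc z hz
    have hexp : 2 ^ (2 * 3 ^ (n + 1)) = 2 ^ m * 2 ^ m * 2 ^ m := by
      rw [← pow_add, ← pow_add]
      congr 1
      rw [hm]; ring
    rw [hexp, pow_mul, pow_mul]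
    exact hkey
end
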